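/- Let n ≥ 3 be an integer and m an odd integer with 1 ≤ m ≤ n. Let t be a real number satisfying (m−1)/(2m) < t ≤ (m+1)/(2(m+2)) if n − m > 1, and (m−1)/(2m) < t ≤ 1/2 if n − m ≤ 1. Define T_t := {x ∈ [0,1]^n : for every subset S ⊆ {1,…,n} of odd cardinality, Σ_{i∉S} x_i − Σ_{i∈S} x_i ≤ (|S|−1)/(2t) + n − 2|S|}. Then the Lebesgue volume of T_t equals 1 − Σ_{k odd, 1 ≤ k ≤ m} (1/n!) · C(n,k) · (k − (k−1)/(2t))^n, where C(n,k) is the binomial coefficient. -/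

import Mathlib

open MeasureTheory Finset
open scoped symmDiff

lemma vol_corner : ∀ (n : ℕ) (c : ℝ), 0 ≤ c →
    volume {x : Fin n → ℝ | (∀ i, 0 ≤ x i) ∧ ∑ i, x i ≤ c} =
      ENNReal.ofReal (c ^ n / n.factorial) := by
  intro n
  induction n with
  | zero =>
    intro c hc
    have h : {x : Fin 0 → ℝ | (∀ i, 0 ≤ x i) ∧ ∑ i, x i ≤ c} = Set.univ := by
      ext x; simp [hc]
    rw [h]
    simp [MeasureTheory.volume_pi, Measure.pi_univ]
  | succ n ih =>
    intro c hc
    classical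
    set T : Set (ℝ × (Fin n → ℝ)) :=
      {p | 0 ≤ p.1 ∧ (∀ i, 0 ≤ p.2 i) ∧ p.1 + ∑ i, p.2 i ≤ c} with hT
    have hTm : MeasurableSet T := by
      have : T = {p : ℝ × (Fin n → ℝ) | 0 ≤ p.1} ∩
          ((⋂ i, {p : ℝ × (Fin n → ℝ) | 0 ≤ p.2 i}) ∩
            {p : ℝ × (Fin n → ℝ) | p.1 + ∑ i, p.2 i ≤ c}) := by
        ext p; simp only [hT, Set.mem_setOf_eq, Set.mem_inter_iff, Set.mem_iInter]
      rw [this]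
      refine (measurableSet_le measurable_const measurable_fst).inter
        ((MeasurableSet.iInter fun i => measurableSet_le measurable_const
          ((measurable_pi_apply i).comp measurable_snd : Measurable fun p : ℝ × (Fin n → ℝ) => p.2 i)).inter
          (measurableSet_le (measurable_fst.add ?_ : Measurable fun p : ℝ × (Fin n → ℝ) => p.1 + ∑ i, p.2 i) measurable_const))
      exact Finset.measurable_sum _ fun i _ => (measurable_pi_apply i).comp measurable_snd
    have hmp := volume_preserving_piFinSuccAbove (fun _ : Fin (n+1) => ℝ) 0
    have hpre : {x : Fin (n+1) → ℝ | (∀ i, 0 ≤ x i) ∧ ∑ i, x i ≤ c}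
        = (MeasurableEquiv.piFinSuccAbove (fun _ => ℝ) 0) ⁻¹' T := by
      ext x
      simp only [Set.mem_preimage, MeasurableEquiv.piFinSuccAbove_apply, hT, Set.mem_setOf_eq,
        Fin.succAbove_zero, Fin.sum_univ_succ, Fin.forall_fin_succ]
      tauto
    rw [hpre, hmp.measure_preimage hTm.nullMeasurableSet, Measure.volume_eq_prod, Measure.prod_apply hTm]
    have hslice : ∀ a : ℝ, (volume ((Prod.mk a) ⁻¹' T))
        = Set.indicator (Set.Icc 0 c) (fun a => ENNReal.ofReal ((c - a) ^ n / n.factorial)) a := by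
      intro a
      by_cases ha : a ∈ Set.Icc 0 c
      · rw [Set.indicator_of_mem ha]
        have h2 : (Prod.mk a) ⁻¹' T = {y : Fin n → ℝ | (∀ i, 0 ≤ y i) ∧ ∑ i, y i ≤ c - a} := by
          ext y
          simp only [Set.mem_preimage, hT, Set.mem_setOf_eq, ha.1, true_and]
          constructor
          · rintro ⟨h1, h2⟩; exact ⟨h1, by linarith⟩
          · rintro ⟨h1, h2⟩; exact ⟨h1, by linarith⟩
        rw [h2, ih _ (by linarith [ha.2])]
      · rw [Set.indicator_of_notMem ha]
        have h2 : (Prod.mk a) ⁻¹' T = ∅ := by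
          ext y
          simp only [Set.mem_preimage, hT, Set.mem_setOf_eq, Set.mem_empty_iff_false, iff_false,
            not_and]
          intro h0 h1
          have hs : 0 ≤ ∑ i, y i := Finset.sum_nonneg fun i _ => h1 i
          simp only [Set.mem_Icc, not_and, not_le] at ha
          have := ha h0
          linarith
        simp [h2]
    rw [lintegral_congr hslice, lintegral_indicator measurableSet_Icc]
    have hint : IntegrableOn (fun a : ℝ => (c - a) ^ n / n.factorial) (Set.Icc 0 c) := by
      apply Continuous.integrableOn_Icc; fun_prop
    have hnn : 0 ≤ᵐ[volume.restrict (Set.Icc 0 c)]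
        fun a : ℝ => (c - a) ^ n / n.factorial := by
      filter_upwards [ae_restrict_mem measurableSet_Icc] with a ha
      have h0 : (0:ℝ) ≤ c - a := by linarith [ha.2]
      positivity
    rw [← ofReal_integral_eq_lintegral_ofReal hint hnn]
    congr 1
    rw [MeasureTheory.integral_Icc_eq_integral_Ioc, ← intervalIntegral.integral_of_le hc]
    have h3 : (∫ a in (0:ℝ)..c, (c - a) ^ n / n.factorial)
        = (∫ a in (0:ℝ)..c, (c - a) ^ n) / n.factorial := intervalIntegral.integral_div _ _
    rw [h3, intervalIntegral.integral_comp_sub_left (fun u => u ^ n) c]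
    simp only [sub_self, sub_zero, integral_pow, zero_pow, ne_eq, Nat.succ_ne_zero,
      not_false_eq_true]
    rw [Nat.factorial_succ]
    have hnf : (0:ℝ) < n.factorial := by positivity
    push_cast
    field_simp
    try ring


lemma vol_hyperplane (n : ℕ) (c : ℝ) :
    volume {x : Fin (n+1) → ℝ | ∑ i, x i = c} = 0 := by
  set T : Set (ℝ × (Fin n → ℝ)) := {p | p.1 + ∑ i, p.2 i = c} with hT
  have hTm : MeasurableSet T := by
    have h : T = (fun p : ℝ × (Fin n → ℝ) => p.1 + ∑ i, p.2 i) ⁻¹' {c} := rfl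
    rw [h]
    exact (measurable_fst.add
      (Finset.measurable_sum _ fun i _ => (measurable_pi_apply i).comp measurable_snd))
      (measurableSet_singleton c)
  have hmp := volume_preserving_piFinSuccAbove (fun _ : Fin (n+1) => ℝ) 0
  have hpre : {x : Fin (n+1) → ℝ | ∑ i, x i = c}
      = (MeasurableEquiv.piFinSuccAbove (fun _ => ℝ) 0) ⁻¹' T := by
    ext x
    simp only [Set.mem_preimage, MeasurableEquiv.piFinSuccAbove_apply, hT, Set.mem_setOf_eq,
      Fin.insertNthEquiv_zero, Fin.consEquiv_symm_apply, Fin.succAbove_zero, Fin.sum_univ_succ,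
      Fin.tail]
  rw [hpre, hmp.measure_preimage hTm.nullMeasurableSet, Measure.volume_eq_prod,
    Measure.prod_apply_symm hTm]
  have h0 : ∀ y : Fin n → ℝ, volume ((fun x : ℝ => (x, y)) ⁻¹' T) = 0 := by
    intro y
    have h : ((fun x : ℝ => (x, y)) ⁻¹' T) = {c - ∑ i, y i} := by
      ext a
      simp only [Set.mem_preimage, hT, Set.mem_setOf_eq, Set.mem_singleton_iff]
      constructor <;> intro h' <;> linarith
    rw [h, Real.volume_singleton]
  simp [h0]

lemma vol_cube_simplex_lt (n : ℕ) (c : ℝ) (hc0 : 0 ≤ c) (hc1 : c ≤ 1) :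
    volume {x : Fin (n+1) → ℝ | (∀ i, 0 ≤ x i ∧ x i ≤ 1) ∧ ∑ i, x i < c} =
      ENNReal.ofReal (c ^ (n+1) / (n+1).factorial) := by
  set A := {x : Fin (n+1) → ℝ | (∀ i, 0 ≤ x i ∧ x i ≤ 1) ∧ ∑ i, x i < c} with hA
  set D := {x : Fin (n+1) → ℝ | (∀ i, 0 ≤ x i) ∧ ∑ i, x i ≤ c} with hD
  have hAD : A ⊆ D := fun x hx => ⟨fun i => (hx.1 i).1, le_of_lt hx.2⟩
  have hDA : D \ A ⊆ {x : Fin (n+1) → ℝ | ∑ i, x i = c} := by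
    rintro x ⟨⟨h1, h2⟩, h3⟩
    have hle : ∀ i, x i ≤ 1 := fun i =>
      le_trans (le_trans (Finset.single_le_sum (fun j _ => h1 j) (mem_univ i)) h2) hc1
    by_contra h
    exact h3 ⟨fun i => ⟨h1 i, hle i⟩, lt_of_le_of_ne h2 h⟩
  apply le_antisymm
  · rw [← vol_corner (n+1) c hc0]; exact measure_mono hAD
  · rw [← vol_corner (n+1) c hc0]
    have hsub : D ⊆ A ∪ (D \ A) := by
      intro x hx
      by_cases h : x ∈ A
      · exact Or.inl h
      · exact Or.inr ⟨hx, h⟩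
    calc volume D ≤ volume (A ∪ (D \ A)) := measure_mono hsub
      _ ≤ volume A + volume (D \ A) := measure_union_le _ _
      _ ≤ volume A + 0 := add_le_add le_rfl
            (le_trans (measure_mono hDA) (le_of_eq (vol_hyperplane n c)))
      _ = volume A := by rw [add_zero]

lemma vol_bad (n : ℕ) (S : Finset (Fin (n+1))) (c : ℝ) (hc0 : 0 ≤ c) (hc1 : c ≤ 1) :
    volume {x : Fin (n+1) → ℝ | (∀ i, 0 ≤ x i ∧ x i ≤ 1) ∧
        (∑ i ∈ S, x i) + ∑ i ∈ Sᶜ, (1 - x i) < c} =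
      ENNReal.ofReal (c ^ (n+1) / (n+1).factorial) := by
  classical
  set f : Fin (n+1) → ℝ → ℝ := fun i a => if i ∈ S then a else 1 - a with hf
  have hR : MeasurePreserving (fun (x : Fin (n+1) → ℝ) (i : Fin (n+1)) => f i (x i))
      volume volume := by
    refine volume_preserving_pi fun i => ?_
    by_cases h : i ∈ S
    · simp only [hf, h, if_true]; exact MeasurePreserving.id _
    · simp only [hf, h, if_false]; exact Measure.measurePreserving_sub_left volume 1
  have hAm : MeasurableSet {x : Fin (n+1) → ℝ | (∀ i, 0 ≤ x i ∧ x i ≤ 1) ∧ ∑ i, x i < c} := by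
    have h : {x : Fin (n+1) → ℝ | (∀ i, 0 ≤ x i ∧ x i ≤ 1) ∧ ∑ i, x i < c}
        = (⋂ i, {x : Fin (n+1) → ℝ | 0 ≤ x i} ∩ {x | x i ≤ 1}) ∩ {x | ∑ i, x i < c} := by
      ext x
      simp only [Set.mem_setOf_eq, Set.mem_inter_iff, Set.mem_iInter]
      try tauto
    rw [h]
    exact (MeasurableSet.iInter fun i =>
        (measurableSet_le measurable_const (measurable_pi_apply i)).inter
        (measurableSet_le (measurable_pi_apply i) measurable_const)).inter
      (measurableSet_lt (Finset.measurable_sum _ fun i _ => measurable_pi_apply i)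
        measurable_const)
  have hpre : {x : Fin (n+1) → ℝ | (∀ i, 0 ≤ x i ∧ x i ≤ 1) ∧
        (∑ i ∈ S, x i) + ∑ i ∈ Sᶜ, (1 - x i) < c}
      = (fun (x : Fin (n+1) → ℝ) (i : Fin (n+1)) => f i (x i)) ⁻¹'
        {x : Fin (n+1) → ℝ | (∀ i, 0 ≤ x i ∧ x i ≤ 1) ∧ ∑ i, x i < c} := by
    ext x
    have hsum : ∑ i, f i (x i) = (∑ i ∈ S, x i) + ∑ i ∈ Sᶜ, (1 - x i) := by
      rw [← Finset.sum_add_sum_compl S fun i => f i (x i)]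
      congr 1
      · exact Finset.sum_congr rfl fun i hi => by simp [hf, hi]
      · refine Finset.sum_congr rfl fun i hi => ?_
        rw [Finset.mem_compl] at hi
        simp [hf, hi]
    simp only [Set.mem_preimage, Set.mem_setOf_eq, hsum]
    constructor
    · rintro ⟨h1, h2⟩
      refine ⟨fun i => ?_, h2⟩
      by_cases h : i ∈ S <;> simp only [hf, h, if_true, if_false] <;>
        constructor <;> linarith [(h1 i).1, (h1 i).2]
    · rintro ⟨h1, h2⟩
      refine ⟨fun i => ?_, h2⟩
      have := h1 i
      by_cases h : i ∈ S <;> simp only [hf, h, if_true, if_false] at this <;>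
        constructor <;> linarith [this.1, this.2]
  rw [hpre, hR.measure_preimage hAm.nullMeasurableSet, vol_cube_simplex_lt n c hc0 hc1]


/-- The volume of the rescaled symmetric slice `T_t` of the local polytope of the `n`-cycle,
for `t` in the indicated range determined by the odd integer `m`. -/
theorem stmt12 (n m : ℕ) (hn : 3 ≤ n) (hmo : Odd m) (hm1 : 1 ≤ m) (hmn : m ≤ n) (t : ℝ)
    (ht_big : m + 1 < n → (((m : ℝ) - 1) / (2 * m) < t ∧ t ≤ ((m : ℝ) + 1) / (2 * ((m : ℝ) + 2))))
    (ht_small : n ≤ m + 1 → (((m : ℝ) - 1) / (2 * m) < t ∧ t ≤ 1 / 2)) :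
    volume {x : Fin n → ℝ |
        (∀ i, 0 ≤ x i ∧ x i ≤ 1) ∧
        ∀ S : Finset (Fin n), Odd S.card →
          (∑ i ∈ Sᶜ, x i) - ∑ i ∈ S, x i ≤ ((S.card : ℝ) - 1) / (2 * t) + n - 2 * S.card} =
      ENNReal.ofReal
        (1 - ∑ k ∈ (Finset.range (m + 1)).filter (fun k => Odd k),
              (1 / n.factorial) * (n.choose k) * ((k : ℝ) - ((k : ℝ) - 1) / (2 * t)) ^ n) := by
  classical
  obtain ⟨N, rfl⟩ : ∃ N, n = N + 1 := ⟨n - 1, by omega⟩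
  have hm1' : (1:ℝ) ≤ m := by exact_mod_cast hm1
  have htl : ((m:ℝ)-1)/(2*m) < t := by
    rcases lt_or_ge (m+1) (N+1) with h | h
    · exact (ht_big h).1
    · exact (ht_small h).1
  have ht0 : 0 < t := by
    refine lt_of_le_of_lt ?_ htl
    apply div_nonneg <;> linarith
  have ht2 : 2 * t ≤ 1 := by
    rcases lt_or_ge (m+1) (N+1) with h | h
    · have h2 := (ht_big h).2
      have h3 : ((m:ℝ)+1)/(2*((m:ℝ)+2)) ≤ 1/2 := by
        rw [div_le_div_iff₀ (by positivity) (by norm_num)]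
        nlinarith
      linarith
    · linarith [(ht_small h).2]
  set C : ℕ → ℝ := fun k => (k:ℝ) - ((k:ℝ)-1)/(2*t) with hC
  have hCle1 : ∀ k : ℕ, 1 ≤ k → C k ≤ 1 := by
    intro k hk
    have hk1 : (1:ℝ) ≤ k := by exact_mod_cast hk
    have h : ((k:ℝ)-1) ≤ ((k:ℝ)-1)/(2*t) := by
      rw [le_div_iff₀ (by positivity)]
      nlinarith
    simp only [hC]
    linarith
  have hCpos : ∀ k : ℕ, 1 ≤ k → k ≤ m → 0 < C k := by
    intro k hk hkm
    have hk1 : (1:ℝ) ≤ k := by exact_mod_cast hk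
    have hkm' : (k:ℝ) ≤ m := by exact_mod_cast hkm
    have hkey : ((k:ℝ)-1)/(2*k) ≤ ((m:ℝ)-1)/(2*m) := by
      rw [div_le_div_iff₀ (by positivity) (by positivity)]
      nlinarith
    have h2 : ((k:ℝ)-1)/(2*k) < t := lt_of_le_of_lt hkey htl
    rw [div_lt_iff₀ (by positivity)] at h2
    simp only [hC]
    rw [sub_pos, div_lt_iff₀ (by positivity)]
    nlinarith
  have hCneg : ∀ k : ℕ, Odd k → m < k → k ≤ N+1 → C k ≤ 0 := by
    intro k hok hmk hkn
    have hk2 : m + 2 ≤ k := by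
      obtain ⟨a, ha⟩ := hok; obtain ⟨b, hb⟩ := hmo; omega
    have h2 := (ht_big (by omega)).2
    have hm2 : (0:ℝ) < (m:ℝ)+2 := by positivity
    have hk2' : (m:ℝ)+2 ≤ k := by exact_mod_cast hk2
    have heq : ((m:ℝ)+1)/((m:ℝ)+2) = 2 * (((m:ℝ)+1)/(2*((m:ℝ)+2))) := by
      field_simp
    have h2t : 2*t ≤ ((m:ℝ)+1)/((m:ℝ)+2) := by rw [heq]; linarith
    have hk0 : (0:ℝ) ≤ k := by positivity
    have h4 : ((m:ℝ)+1)/((m:ℝ)+2)*(k:ℝ) ≤ (k:ℝ)-1 := by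
      rw [div_mul_eq_mul_div, div_le_iff₀ hm2]
      nlinarith
    have h3 : 2*t*(k:ℝ) ≤ (k:ℝ)-1 := by
      nlinarith [mul_le_mul_of_nonneg_right h2t hk0]
    simp only [hC]
    rw [sub_nonpos, le_div_iff₀ (by positivity)]
    nlinarith
  set K : Set (Fin (N+1) → ℝ) := {x | ∀ i, 0 ≤ x i ∧ x i ≤ 1} with hK
  set Bad : Finset (Fin (N+1)) → Set (Fin (N+1) → ℝ) := fun S =>
    {x | (∀ i, 0 ≤ x i ∧ x i ≤ 1) ∧ (∑ i ∈ S, x i) + ∑ i ∈ Sᶜ, (1 - x i) < C S.card} with hBad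
  set 𝒮 : Finset (Finset (Fin (N+1))) := univ.filter (fun S => Odd S.card) with hSS
  have key : ∀ (S : Finset (Fin (N+1))) (x : Fin (N+1) → ℝ),
      ((∑ i ∈ Sᶜ, x i) - ∑ i ∈ S, x i ≤
        ((S.card : ℝ) - 1) / (2 * t) + ((N+1 : ℕ) : ℝ) - 2 * S.card) ↔
      ¬ ((∑ i ∈ S, x i) + ∑ i ∈ Sᶜ, (1 - x i) < C S.card) := by
    intro S x
    have hle : S.card ≤ N+1 := by simpa using Finset.card_le_univ S
    have hcc : ((Sᶜ.card : ℕ) : ℝ) = ((N+1 : ℕ) : ℝ) - S.card := by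
      rw [Finset.card_compl, Fintype.card_fin, Nat.cast_sub hle]
    have hsumc : ∑ i ∈ Sᶜ, (1 - x i) = ((Sᶜ.card : ℕ) : ℝ) - ∑ i ∈ Sᶜ, x i := by
      rw [Finset.sum_sub_distrib, Finset.sum_const, nsmul_eq_mul, mul_one]
    rw [hsumc, hcc, not_lt]
    simp only [hC]
    constructor <;> intro h <;> linarith
  have hrw : ∀ (S : Finset (Fin (N+1))) (x : Fin (N+1) → ℝ),
      ∑ i ∈ S, x i + ∑ i ∈ Sᶜ, (1 - x i) = ∑ i, (if i ∈ S then x i else 1 - x i) := by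
    intro S x
    have hA : ∑ i ∈ S, x i = ∑ i ∈ S, (if i ∈ S then x i else 1 - x i) :=
      Finset.sum_congr rfl fun i hi => by simp [hi]
    have hB : ∑ i ∈ Sᶜ, (1 - x i) = ∑ i ∈ Sᶜ, (if i ∈ S then x i else 1 - x i) :=
      Finset.sum_congr rfl fun i hi => by simp [Finset.mem_compl.mp hi]
    rw [hA, hB, Finset.sum_add_sum_compl]
  have hBadm : ∀ S, MeasurableSet (Bad S) := by
    intro S
    have h : Bad S = (⋂ i, {x : Fin (N+1) → ℝ | 0 ≤ x i} ∩ {x | x i ≤ 1}) ∩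
        {x | (∑ i ∈ S, x i) + ∑ i ∈ Sᶜ, (1 - x i) < C S.card} := by
      ext x
      simp only [hBad, Set.mem_setOf_eq, Set.mem_inter_iff, Set.mem_iInter]
      try tauto
    rw [h]
    refine (MeasurableSet.iInter fun i =>
        (measurableSet_le measurable_const (measurable_pi_apply i)).inter
        (measurableSet_le (measurable_pi_apply i) measurable_const)).inter
      (measurableSet_lt (Measurable.add ?_ ?_) measurable_const)
    · exact Finset.measurable_sum _ fun i _ => measurable_pi_apply i
    · exact Finset.measurable_sum _ fun i _ => measurable_const.sub (measurable_pi_apply i)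
  have hdisj : (↑𝒮 : Set (Finset (Fin (N+1)))).PairwiseDisjoint Bad := by
    intro S1 h1 S2 h2 hne
    rw [Finset.mem_coe, hSS, Finset.mem_filter] at h1 h2
    apply Set.disjoint_left.mpr
    intro x hx1 hx2
    have hcube : ∀ i, 0 ≤ x i ∧ x i ≤ 1 := hx1.1
    have hb1 : ∑ i ∈ S1, x i + ∑ i ∈ S1ᶜ, (1 - x i) < C S1.card := hx1.2
    have hb2 : ∑ i ∈ S2, x i + ∑ i ∈ S2ᶜ, (1 - x i) < C S2.card := hx2.2
    have hk1 : 1 ≤ S1.card := by obtain ⟨a, ha⟩ := h1.2; omega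
    have hk2 : 1 ≤ S2.card := by obtain ⟨a, ha⟩ := h2.2; omega
    have hC1 : C S1.card ≤ 1 := hCle1 _ hk1
    have hC2 : C S2.card ≤ 1 := hCle1 _ hk2
    have hcard2 : 2 ≤ (S1 ∆ S2).card := by
      have hne0 : (S1 ∆ S2).card ≠ 0 := by
        simp only [ne_eq, Finset.card_eq_zero]
        intro h
        exact hne (by simpa using symmDiff_eq_bot.mp h)
      have e1 := Finset.card_sdiff_add_card_inter S1 S2
      have e2 := Finset.card_sdiff_add_card_inter S2 S1
      have e3 : (S1 ∆ S2).card = (S1 \ S2).card + (S2 \ S1).card := by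
        rw [symmDiff_def, Finset.sup_eq_union, Finset.card_union_of_disjoint disjoint_sdiff_sdiff]
      rw [Finset.inter_comm S2 S1] at e2
      obtain ⟨a, ha⟩ := h1.2
      obtain ⟨b, hb⟩ := h2.2
      omega
    have hone : ∀ i ∈ S1 ∆ S2,
        (if i ∈ S1 then x i else 1 - x i) + (if i ∈ S2 then x i else 1 - x i) = 1 := by
      intro i hi
      rw [Finset.mem_symmDiff] at hi
      rcases hi with ⟨ha, hb⟩ | ⟨ha, hb⟩ <;> simp [ha, hb] <;> ring
    have hnn : ∀ i, 0 ≤ (if i ∈ S1 then x i else 1 - x i) + (if i ∈ S2 then x i else 1 - x i) := by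
      intro i
      have h := hcube i
      by_cases ha : i ∈ S1 <;> by_cases hb : i ∈ S2 <;> simp [ha, hb] <;> linarith [h.1, h.2]
    have hge : ((S1 ∆ S2).card : ℝ) ≤
        ∑ i, ((if i ∈ S1 then x i else 1 - x i) + (if i ∈ S2 then x i else 1 - x i)) := by
      calc ((S1 ∆ S2).card : ℝ) = ∑ _i ∈ S1 ∆ S2, (1:ℝ) := by simp
        _ = ∑ i ∈ S1 ∆ S2,
            ((if i ∈ S1 then x i else 1 - x i) + (if i ∈ S2 then x i else 1 - x i)) :=
          (Finset.sum_congr rfl hone).symm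
        _ ≤ _ := Finset.sum_le_sum_of_subset_of_nonneg (Finset.subset_univ _)
            (fun i _ _ => hnn i)
    rw [Finset.sum_add_distrib, ← hrw S1 x, ← hrw S2 x] at hge
    have hcast : (2:ℝ) ≤ ((S1 ∆ S2).card : ℝ) := by exact_mod_cast hcard2
    linarith
  have hvol : ∀ S ∈ 𝒮, volume (Bad S) =
      if S.card ≤ m then ENNReal.ofReal (C S.card ^ (N+1) / (N+1).factorial) else 0 := by
    intro S hS
    rw [hSS, Finset.mem_filter] at hS
    have hk1 : 1 ≤ S.card := by obtain ⟨a, ha⟩ := hS.2; omega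
    by_cases hkm : S.card ≤ m
    · rw [if_pos hkm]
      exact vol_bad N S (C S.card) (hCpos _ hk1 hkm).le (hCle1 _ hk1)
    · rw [if_neg hkm]
      have hkn : S.card ≤ N+1 := by simpa using Finset.card_le_univ S
      have hC0 : C S.card ≤ 0 := hCneg _ hS.2 (by omega) hkn
      have hem : Bad S = ∅ := by
        ext x
        simp only [hBad, Set.mem_setOf_eq, Set.mem_empty_iff_false, iff_false, not_and]
        intro hcube
        rw [not_lt]
        have h1 : 0 ≤ ∑ i ∈ S, x i := Finset.sum_nonneg fun i _ => (hcube i).1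
        have h2 : 0 ≤ ∑ i ∈ Sᶜ, (1 - x i) :=
          Finset.sum_nonneg fun i _ => by linarith [(hcube i).2]
        linarith
      simp [hem]
  have hU : volume (⋃ S ∈ 𝒮, Bad S) = ∑ S ∈ 𝒮, volume (Bad S) :=
    measure_biUnion_finset hdisj fun S _ => hBadm S
  -- reduce the sum
  set g : ℕ → ENNReal := fun k =>
    if Odd k ∧ k ≤ m then ENNReal.ofReal (C k ^ (N+1) / (N+1).factorial) else 0 with hg
  have h1 : ∑ S ∈ 𝒮, volume (Bad S) = ∑ S ∈ (univ : Finset (Finset (Fin (N+1)))), g S.card := by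
    rw [hSS, Finset.sum_filter]
    refine Finset.sum_congr rfl fun S _ => ?_
    by_cases ho : Odd S.card
    · rw [if_pos ho, hvol S (by rw [hSS, Finset.mem_filter]; exact ⟨Finset.mem_univ _, ho⟩)]
      by_cases hm' : S.card ≤ m
      · rw [if_pos hm', hg]
        simp [ho, hm']
      · rw [if_neg hm', hg]
        simp [ho, hm']
    · rw [if_neg ho, hg]
      simp [ho]
  have hcardu : (univ : Finset (Fin (N+1))).card = N+1 := by simp
  have h2 : ∑ S ∈ (univ : Finset (Finset (Fin (N+1)))), g S.card
      = ∑ j ∈ range (N+2), ((N+1).choose j) • g j := by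
    rw [← Finset.powerset_univ, Finset.sum_powerset, hcardu]
    refine Finset.sum_congr rfl fun j hj => ?_
    rw [Finset.sum_congr rfl
      (fun S hS => by rw [(Finset.mem_powersetCard.mp hS).2] :
        ∀ S ∈ Finset.powersetCard j (univ : Finset (Fin (N+1))), g S.card = g j),
      Finset.sum_const, Finset.card_powersetCard, hcardu]
  have h3 : ∑ j ∈ range (N+2), ((N+1).choose j) • g j
      = ∑ k ∈ (Finset.range (m+1)).filter (fun k => Odd k),
          ((N+1).choose k) • ENNReal.ofReal (C k ^ (N+1) / (N+1).factorial) := by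
    rw [← Finset.sum_subset (s₁ := (Finset.range (m+1)).filter (fun k => Odd k))
      (fun k hk => by
        rw [Finset.mem_filter, Finset.mem_range] at hk
        rw [Finset.mem_range]
        omega)
      (fun k hk hk' => by
        rw [Finset.mem_filter, Finset.mem_range] at hk'
        rw [Finset.mem_range] at hk
        have : ¬(Odd k ∧ k ≤ m) := by
          intro hc
          exact hk' ⟨by omega, hc.1⟩
        rw [hg]
        simp only [this, if_false, smul_zero])]
    refine Finset.sum_congr rfl fun k hk => ?_
    rw [Finset.mem_filter, Finset.mem_range] at hk
    have hodd : Odd k ∧ k ≤ m := ⟨hk.2, by omega⟩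
    simp only [hg]
    rw [if_pos hodd]
  have hs0 : ∀ k ∈ (Finset.range (m+1)).filter (fun k => Odd k), (0:ℝ) ≤
      (1 / ((N+1).factorial : ℝ)) * (((N+1).choose k : ℕ) : ℝ) * (C k) ^ (N+1) := by
    intro k hk
    rw [Finset.mem_filter, Finset.mem_range] at hk
    have hk1 : 1 ≤ k := hk.2.pos
    have := (hCpos k hk1 (by omega)).le
    positivity
  have h4 : ∑ k ∈ (Finset.range (m+1)).filter (fun k => Odd k),
        ((N+1).choose k) • ENNReal.ofReal (C k ^ (N+1) / (N+1).factorial)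
      = ENNReal.ofReal (∑ k ∈ (Finset.range (m+1)).filter (fun k => Odd k),
          (1 / ((N+1).factorial : ℝ)) * (((N+1).choose k : ℕ) : ℝ) * (C k) ^ (N+1)) := by
    rw [ENNReal.ofReal_sum_of_nonneg hs0]
    refine Finset.sum_congr rfl fun k hk => ?_
    rw [Finset.mem_filter, Finset.mem_range] at hk
    have hk1 : 1 ≤ k := hk.2.pos
    have hCk := (hCpos k hk1 (by omega)).le
    rw [nsmul_eq_mul, ← ENNReal.ofReal_natCast ((N+1).choose k),
      ← ENNReal.ofReal_mul (by positivity)]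
    congr 1
    have hf : (0:ℝ) < ((N+1).factorial : ℝ) := by positivity
    field_simp
    try ring
  -- cube
  have hKvol : volume K = 1 := by
    have h : K = Set.pi Set.univ (fun _ : Fin (N+1) => Set.Icc (0:ℝ) 1) := by
      ext x
      simp only [hK, Set.mem_setOf_eq, Set.mem_pi, Set.mem_univ, true_implies, Set.mem_Icc]
    rw [h, volume_pi_pi]
    simp [Real.volume_Icc]
  have hUK : (⋃ S ∈ 𝒮, Bad S) ⊆ K := by
    simp only [Set.iUnion_subset_iff]
    intro S _ x hx
    exact hx.1
  have hUm : MeasurableSet (⋃ S ∈ 𝒮, Bad S) := 𝒮.measurableSet_biUnion fun S _ => hBadm S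
  have hUfin : volume (⋃ S ∈ 𝒮, Bad S) ≠ ⊤ := by
    refine ne_top_of_le_ne_top ?_ (measure_mono hUK)
    rw [hKvol]
    exact ENNReal.one_ne_top
  have hTeq : {x : Fin (N+1) → ℝ |
        (∀ i, 0 ≤ x i ∧ x i ≤ 1) ∧
        ∀ S : Finset (Fin (N+1)), Odd S.card →
          (∑ i ∈ Sᶜ, x i) - ∑ i ∈ S, x i ≤ ((S.card : ℝ) - 1) / (2 * t) + ((N+1:ℕ):ℝ) - 2 * S.card}
      = K \ ⋃ S ∈ 𝒮, Bad S := by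
    ext x
    simp only [Set.mem_setOf_eq, Set.mem_diff, Set.mem_iUnion, hK, not_exists]
    constructor
    · rintro ⟨hx, hS⟩
      refine ⟨hx, fun S hSmem hmem => ?_⟩
      rw [hSS, Finset.mem_filter] at hSmem
      exact (key S x).mp (hS S hSmem.2) hmem.2
    · rintro ⟨hx, hS⟩
      refine ⟨hx, fun S hSodd => ?_⟩
      refine (key S x).mpr fun hlt => ?_
      exact hS S (by rw [hSS, Finset.mem_filter]; exact ⟨Finset.mem_univ _, hSodd⟩) ⟨hx, hlt⟩
  rw [hTeq, measure_diff hUK hUm.nullMeasurableSet hUfin, hKvol, hU, h1, h2, h3, h4]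
  have hs0' : (0:ℝ) ≤ ∑ k ∈ (Finset.range (m+1)).filter (fun k => Odd k),
      (1 / ((N+1).factorial : ℝ)) * (((N+1).choose k : ℕ) : ℝ) * (C k) ^ (N+1) :=
    Finset.sum_nonneg hs0
  rw [ENNReal.ofReal_sub _ hs0', ENNReal.ofReal_one]
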